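/- Let g : 2^V → [0,1] be a monotone submodular set function on a finite ground set V with g(∅) = 0, let OPT = max_{S ⊆ V, |S| ≤ k} g(S), and let c ∈ (0,1]. Suppose Ṽ is a random subset of V satisfying P(v ∈ Ṽ) ≥ c·g({v}) for every v ∈ V. Let Ṽ_s be the union of s independent copies of Ṽ, and let S*(Ṽ_s) be an optimal solution to max_{S ⊆ Ṽ_s, |S| ≤ k} g(S). Then for any ε₁, ε₂ ∈ (0,1], if s ≥ (k/(c·ε₂))·log(k/ε₁), we have E[g(S*(Ṽ_s))] ≥ (1−ε₁)·OPT − ε₂. -/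

import Mathlib

open MeasureTheory ProbabilityTheory Finset

/-- The optimal value of max_{S ⊆ W, |S| ≤ k} g(S). -/
noncomputable def bestVal {V : Type*} [DecidableEq V]
    (g : Finset V → ℝ) (k : ℕ) (W : Finset V) : ℝ :=
  (W.powerset.filter (fun S => S.card ≤ k)).sup'
    ⟨∅, by simp⟩ g

/-- Subadditivity from submodularity with `g ∅ = 0`. -/
lemma subadd_aux {V : Type*} [DecidableEq V] {g : Finset V → ℝ}
    (hempty : g ∅ = 0) (hg0 : ∀ S, 0 ≤ g S)
    (hsub : ∀ A B : Finset V, A ⊆ B → ∀ v ∉ B,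
      g (insert v B) - g B ≤ g (insert v A) - g A) :
    ∀ (D A : Finset V), g (A ∪ D) ≤ g A + ∑ v ∈ D, g {v} := by
  intro D
  induction D using Finset.induction_on with
  | empty => intro A; simp
  | @insert v D hvD ih =>
    intro A
    rw [Finset.union_insert, Finset.sum_insert hvD]
    by_cases hv : v ∈ A ∪ D
    · rw [Finset.insert_eq_self.2 hv]
      have h1 := ih A
      have h0 : (0:ℝ) ≤ g {v} := hg0 _
      linarith
    · have key := hsub ∅ (A ∪ D) (Finset.empty_subset _) v hv
      rw [show (insert v ∅ : Finset V) = {v} from rfl, hempty, sub_zero] at key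
      have h1 := ih A
      linarith

lemma le_bestVal {V : Type*} [DecidableEq V]
    (g : Finset V → ℝ) (k : ℕ) {W T : Finset V} (hT : T ⊆ W) (hcard : T.card ≤ k) :
    g T ≤ bestVal g k W :=
  Finset.le_sup' g (by simp [Finset.mem_filter, Finset.mem_powerset, hT, hcard])

/-- Lemma 1 of the paper: sampling preserves near-optimality.
If each of s i.i.d. random subsets includes every v with probability at least
c·g({v}), and s ≥ (k/(cε₂))·log(k/ε₁), then optimizing g over the union Ṽ_s
of the copies gives E[g(S*(Ṽ_s))] ≥ (1−ε₁)·OPT − ε₂. -/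
theorem stmt_0 {V : Type*} [Fintype V] [DecidableEq V]
    {Ω : Type*} [MeasurableSpace Ω] (μ : Measure Ω) [IsProbabilityMeasure μ]
    (g : Finset V → ℝ)
    (hg01 : ∀ S, 0 ≤ g S ∧ g S ≤ 1)
    (hmono : ∀ A B : Finset V, A ⊆ B → g A ≤ g B)
    (hsub : ∀ A B : Finset V, A ⊆ B → ∀ v ∉ B,
      g (insert v B) - g B ≤ g (insert v A) - g A)
    (hempty : g ∅ = 0)
    (k : ℕ) (hk : 1 ≤ k)
    (c : ℝ) (hc0 : 0 < c) (hc1 : c ≤ 1)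
    (ε₁ ε₂ : ℝ) (hε₁ : ε₁ ∈ Set.Ioc (0:ℝ) 1) (hε₂ : ε₂ ∈ Set.Ioc (0:ℝ) 1)
    (s : ℕ) (hs : 0 < s)
    (hslb : (s : ℝ) ≥ (k : ℝ) / (c * ε₂) * Real.log ((k : ℝ) / ε₁))
    (Vt : Fin s → Ω → Finset V)
    (hmeas : ∀ i (v : V), MeasurableSet {ω | v ∈ Vt i ω})
    -- for each item, the s inclusion events are independent (i.i.d. copies)
    (hindep : ∀ v : V, iIndepSet (fun i : Fin s => {ω | v ∈ Vt i ω}) μ)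
    -- each copy includes v with probability at least c·g({v})
    (hprob : ∀ i (v : V), c * g {v} ≤ (μ {ω | v ∈ Vt i ω}).toReal)
    (Vs : Ω → Finset V)
    (hVs : ∀ ω, Vs ω = Finset.univ.biUnion (fun i : Fin s => Vt i ω))
    (hint : Integrable (fun ω => bestVal g k (Vs ω)) μ) :
    ∫ ω, bestVal g k (Vs ω) ∂μ ≥
      (1 - ε₁) * bestVal g k (Finset.univ : Finset V) - ε₂ := by
  obtain ⟨hε₁0, hε₁1⟩ := hε₁
  obtain ⟨hε₂0, hε₂1⟩ := hε₂
  have hk0 : (0:ℝ) < (k:ℝ) := by exact_mod_cast hk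
  set OPT : ℝ := bestVal g k (Finset.univ : Finset V) with hOPTdef
  -- an optimal set S*
  obtain ⟨Sstar, hSmem, hSval⟩ :=
    Finset.exists_mem_eq_sup'
      (⟨∅, by simp⟩ : ((Finset.univ : Finset V).powerset.filter
        (fun S => S.card ≤ k)).Nonempty) g
  have hScard : Sstar.card ≤ k := (Finset.mem_filter.1 hSmem).2
  have hOPT : OPT = g Sstar := hSval
  have hOPT0 : 0 ≤ OPT := hOPT ▸ (hg01 Sstar).1
  have hgvOPT : ∀ v : V, g {v} ≤ OPT := fun v =>
    le_bestVal g k (Finset.subset_univ _) (by simpa using hk)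
  have hg0 : ∀ S, 0 ≤ g S := fun S => (hg01 S).1
  -- the "large" elements
  set S₁ : Finset V := Sstar.filter (fun v => ε₂ / k ≤ g {v}) with hS₁def
  have hS₁sub : S₁ ⊆ Sstar := Finset.filter_subset _ _
  have hS₁card : S₁.card ≤ k := le_trans (Finset.card_le_card hS₁sub) hScard
  -- g S₁ ≥ OPT - ε₂
  have hgS1 : OPT - ε₂ ≤ g S₁ := by
    have hsplit : S₁ ∪ Sstar \ S₁ = Sstar := Finset.union_sdiff_of_subset hS₁sub
    have h1 := subadd_aux hempty hg0 hsub (Sstar \ S₁) S₁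
    rw [hsplit] at h1
    have h2 : ∑ v ∈ Sstar \ S₁, g {v} ≤ ε₂ := by
      have hbd : ∀ v ∈ Sstar \ S₁, g {v} ≤ ε₂ / k := by
        intro v hv
        rw [Finset.mem_sdiff] at hv
        have : ¬ (ε₂ / k ≤ g {v}) := by
          intro h; exact hv.2 (Finset.mem_filter.2 ⟨hv.1, h⟩)
        linarith
      calc ∑ v ∈ Sstar \ S₁, g {v} ≤ ∑ _v ∈ Sstar \ S₁, (ε₂ / k) :=
            Finset.sum_le_sum hbd
        _ = (Sstar \ S₁).card * (ε₂ / k) := by rw [Finset.sum_const]; ring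
        _ ≤ k * (ε₂ / k) := by
            apply mul_le_mul_of_nonneg_right _ (by positivity)
            exact_mod_cast le_trans (Finset.card_le_card (Finset.sdiff_subset)) hScard
        _ = ε₂ := by field_simp
    rw [hOPT]; linarith
  -- the bad event for each v
  set Bad : V → Set Ω := fun v => {ω | v ∉ Vs ω} with hBaddef
  have hBadeq : ∀ v, Bad v = ⋂ i : Fin s, {ω | v ∈ Vt i ω}ᶜ := by
    intro v; ext ω
    simp [hBaddef, hVs ω, Finset.mem_biUnion]
  have hBadmeas : ∀ v, MeasurableSet (Bad v) := by
    intro v; rw [hBadeq]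
    exact MeasurableSet.iInter fun i => (hmeas i v).compl
  -- probability bound for v ∈ S₁
  have hBadprob : ∀ v ∈ S₁, (μ (Bad v)).toReal ≤ ε₁ / k := by
    intro v hv
    have hgv : ε₂ / k ≤ g {v} := (Finset.mem_filter.1 hv).2
    have hgv0 : 0 ≤ g {v} := hg0 _
    have hprod : μ (Bad v) = ∏ i : Fin s, μ ({ω | v ∈ Vt i ω}ᶜ) := by
      rw [hBadeq]
      exact ((ProbabilityTheory.iIndepSet_iff_iIndep _ _).1 (hindep v)).meas_iInter
        (fun i => (MeasurableSpace.measurableSet_generateFrom (Set.mem_singleton _)).compl)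
    have hfac : ∀ i : Fin s, (μ ({ω | v ∈ Vt i ω}ᶜ)).toReal
        = 1 - (μ {ω | v ∈ Vt i ω}).toReal := by
      intro i
      rw [prob_compl_eq_one_sub (hmeas i v),
        ENNReal.toReal_sub_of_le (prob_le_one) (by simp)]
      simp
    have hL0 : 0 ≤ Real.log ((k:ℝ) / ε₁) := by
      apply Real.log_nonneg
      rw [le_div_iff₀ hε₁0]
      have hk1 : (1:ℝ) ≤ (k:ℝ) := by exact_mod_cast hk
      linarith
    have hexp : Real.exp (-(s * (c * g {v}))) ≤ ε₁ / k := by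
      rw [← Real.le_log_iff_exp_le (by positivity)]
      have hlog : Real.log (ε₁ / k) = - Real.log ((k:ℝ) / ε₁) := by
        rw [← Real.log_inv]; congr 1; field_simp
      rw [hlog, neg_le_neg_iff]
      -- need: log(k/ε₁) ≤ s * (c * g{v})
      have h1 : (k:ℝ) / ε₂ * Real.log ((k:ℝ)/ε₁) ≤ (s:ℝ) * c := by
        have := mul_le_mul_of_nonneg_right hslb (le_of_lt hc0)
        calc (k:ℝ) / ε₂ * Real.log ((k:ℝ)/ε₁)
            = ((k:ℝ) / (c*ε₂) * Real.log ((k:ℝ)/ε₁)) * c := by field_simp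
          _ ≤ (s:ℝ) * c := this
      have h2 : (1:ℝ) ≤ (k:ℝ) / ε₂ * g {v} := by
        rw [div_mul_eq_mul_div, le_div_iff₀ hε₂0]
        calc (1:ℝ) * ε₂ = ε₂ := by ring
          _ = k * (ε₂ / k) := by field_simp
          _ ≤ k * g {v} := mul_le_mul_of_nonneg_left hgv (le_of_lt hk0)
      calc Real.log ((k:ℝ)/ε₁) = 1 * Real.log ((k:ℝ)/ε₁) := by ring
        _ ≤ ((k:ℝ) / ε₂ * g {v}) * Real.log ((k:ℝ)/ε₁) :=
            mul_le_mul_of_nonneg_right h2 hL0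
        _ = ((k:ℝ) / ε₂ * Real.log ((k:ℝ)/ε₁)) * g {v} := by ring
        _ ≤ ((s:ℝ) * c) * g {v} := mul_le_mul_of_nonneg_right h1 hgv0
        _ = (s:ℝ) * (c * g {v}) := by ring
    calc (μ (Bad v)).toReal
        = ∏ i : Fin s, (μ ({ω | v ∈ Vt i ω}ᶜ)).toReal := by
          rw [hprod, ENNReal.toReal_prod]
      _ ≤ ∏ _i : Fin s, Real.exp (-(c * g {v})) := by
          apply Finset.prod_le_prod (fun i _ => ENNReal.toReal_nonneg)
          intro i _
          rw [hfac i]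
          have h1 := hprob i v
          have h2 := Real.add_one_le_exp (-(c * g {v}))
          linarith
      _ = Real.exp (-(c * g {v})) ^ s := by simp
      _ = Real.exp (-(s * (c * g {v}))) := by
          rw [← Real.exp_nat_mul]; ring_nf
      _ ≤ ε₁ / k := hexp
  -- the lower-bounding integrable function
  set lower : Ω → ℝ := fun ω =>
    g S₁ - ∑ v ∈ S₁, Set.indicator (Bad v) (fun _ => g {v}) ω with hlowerdef
  have hlower_le : ∀ ω, lower ω ≤ bestVal g k (Vs ω) := by
    intro ω
    have h1 : g (S₁ ∩ Vs ω) ≤ bestVal g k (Vs ω) :=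
      le_bestVal g k (Finset.inter_subset_right)
        (le_trans (Finset.card_le_card Finset.inter_subset_left) hS₁card)
    have hsplit : (S₁ ∩ Vs ω) ∪ S₁ \ (S₁ ∩ Vs ω) = S₁ :=
      Finset.union_sdiff_of_subset Finset.inter_subset_left
    have h2 := subadd_aux hempty hg0 hsub (S₁ \ (S₁ ∩ Vs ω)) (S₁ ∩ Vs ω)
    rw [hsplit] at h2
    have h3 : ∑ v ∈ S₁ \ (S₁ ∩ Vs ω), g {v}
        = ∑ v ∈ S₁, Set.indicator (Bad v) (fun _ => g {v}) ω := by
      have : S₁ \ (S₁ ∩ Vs ω) = S₁.filter (fun v => v ∉ Vs ω) := by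
        ext v; simp [Finset.mem_sdiff, Finset.mem_filter]
      rw [this, Finset.sum_filter]
      apply Finset.sum_congr rfl
      intro v _
      by_cases h : v ∈ Vs ω <;> simp [Set.indicator_apply, hBaddef, h]
    simp only [hlowerdef]
    linarith
  have hlower_int : Integrable lower μ := by
    apply Integrable.sub (integrable_const _)
    exact integrable_finset_sum _ fun v _ =>
      (integrable_const (g {v})).indicator (hBadmeas v)
  have hlower_integral : ∫ ω, lower ω ∂μ
      = g S₁ - ∑ v ∈ S₁, g {v} * (μ (Bad v)).toReal := by
    rw [hlowerdef]
    rw [integral_sub (integrable_const _) (integrable_finset_sum _ fun v _ =>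
      (integrable_const (g {v})).indicator (hBadmeas v))]
    rw [integral_const, integral_finset_sum _ fun v _ =>
      (integrable_const (g {v})).indicator (hBadmeas v)]
    simp only [measure_univ, ENNReal.toReal_one, smul_eq_mul, one_mul, probReal_univ]
    congr 1
    apply Finset.sum_congr rfl
    intro v _
    rw [integral_indicator_const _ (hBadmeas v)]
    simp [mul_comm, Measure.real]
  have hsum_bd : ∑ v ∈ S₁, g {v} * (μ (Bad v)).toReal ≤ ε₁ * OPT := by
    calc ∑ v ∈ S₁, g {v} * (μ (Bad v)).toReal
        ≤ ∑ _v ∈ S₁, OPT * (ε₁ / k) := by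
          apply Finset.sum_le_sum
          intro v hv
          exact mul_le_mul (hgvOPT v) (hBadprob v hv) ENNReal.toReal_nonneg hOPT0
      _ = S₁.card * (OPT * (ε₁ / k)) := by rw [Finset.sum_const]; ring
      _ ≤ k * (OPT * (ε₁ / k)) := by
          apply mul_le_mul_of_nonneg_right _ (by positivity)
          exact_mod_cast hS₁card
      _ = ε₁ * OPT := by field_simp
  have hmain : ∫ ω, lower ω ∂μ ≤ ∫ ω, bestVal g k (Vs ω) ∂μ :=
    integral_mono hlower_int hint hlower_le
  have hOPT1 : OPT ≤ 1 := hOPT ▸ (hg01 Sstar).2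
  rw [hlower_integral] at hmain
  have : (1 - ε₁) * OPT - ε₂ ≤ g S₁ - ∑ v ∈ S₁, g {v} * (μ (Bad v)).toReal := by
    nlinarith
  linarith
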